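/- Let K be a field of characteristic different from 2 and let A = K[X]/(X²) with X homogeneous of degree −1 and differential determined by d(X)=1 (and d(K)=0). Then the dg-extension (K,0)→(A,d) is not dg-separable: there is no element ω of degree 0 in A⊗_K A with X·ω = ω·X and mapping to 1 under the multiplication map A⊗_K A → A. -/

import Mathlib

open scoped TensorProduct

section DGCore

variable {A : Type} [Ring A] {B : Type} [Ring B]

/-- `(A, d)` together with the grading `𝒜` is a differential graded ring:
`d` is a square-zero additive endomorphism of degree `1` satisfying the graded
Leibniz rule. -/
structure IsDGRing (𝒜 : ℤ → AddSubgroup A) (d : A →+ A) : Prop where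
  d_sq : ∀ x, d (d x) = 0
  d_mem : ∀ (i : ℤ), ∀ x ∈ 𝒜 i, d x ∈ 𝒜 (i + 1)
  leibniz : ∀ (i : ℤ) (a b : A), a ∈ 𝒜 i →
    d (a * b) = d a * b + ((Int.negOnePow i : ℤ)) • (a * d b)

/-- A homomorphism of differential graded rings (a dg-extension). -/
structure IsDGHom (𝒜 : ℤ → AddSubgroup A) (dA : A →+ A)
    (𝒝 : ℤ → AddSubgroup B) (dB : B →+ B) (φ : A →+* B) : Prop where
  map_mem : ∀ (i : ℤ), ∀ x ∈ 𝒜 i, φ x ∈ 𝒝 i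
  map_d : ∀ x, φ (dA x) = dB (φ x)

/-- Graded commutativity: `a * b = (-1)^{|a||b|} b * a` for homogeneous elements. -/
def IsGradedComm (𝒜 : ℤ → AddSubgroup A) : Prop :=
  ∀ (i j : ℤ) (a b : A), a ∈ 𝒜 i → b ∈ 𝒜 j →
    a * b = ((Int.negOnePow (i * j) : ℤ)) • (b * a)

/-- A dg-ring is acyclic if its homology vanishes, i.e. every cycle is a boundary. -/
def IsAcyclic (d : A →+ A) : Prop := ∀ x, d x = 0 → ∃ y, d y = x

/-- A dg left ideal: a graded additive subgroup closed under the differential and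
under left multiplication. -/
def IsDGLeftIdeal (𝒜 : ℤ → AddSubgroup A) [GradedRing 𝒜] (d : A →+ A)
    (I : AddSubgroup A) : Prop :=
  (∀ (a : A), ∀ x ∈ I, a * x ∈ I) ∧ (∀ x ∈ I, d x ∈ I) ∧
    (∀ x ∈ I, ∀ i : ℤ, (DirectSum.decompose 𝒜 x i : A) ∈ I)

/-- A dg right ideal. -/
def IsDGRightIdeal (𝒜 : ℤ → AddSubgroup A) [GradedRing 𝒜] (d : A →+ A)
    (I : AddSubgroup A) : Prop :=
  (∀ (a : A), ∀ x ∈ I, x * a ∈ I) ∧ (∀ x ∈ I, d x ∈ I) ∧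
    (∀ x ∈ I, ∀ i : ℤ, (DirectSum.decompose 𝒜 x i : A) ∈ I)

/-- A dg-division ring: the only dg left ideals and the only dg right ideals
are `0` and the whole ring. -/
def IsDGDivisionRing (𝒜 : ℤ → AddSubgroup A) [GradedRing 𝒜] (d : A →+ A) : Prop :=
  (0 : A) ≠ 1 ∧ (∀ I, IsDGLeftIdeal 𝒜 d I → I = ⊥ ∨ I = ⊤) ∧
    (∀ I, IsDGRightIdeal 𝒜 d I → I = ⊥ ∨ I = ⊤)

/-- A graded division ring (gr-field): every nonzero homogeneous element is invertible. -/
def IsGradedDivisionRing (𝒜 : ℤ → AddSubgroup A) : Prop :=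
  (0 : A) ≠ 1 ∧ ∀ (i : ℤ) (x : A), x ∈ 𝒜 i → x ≠ 0 → IsUnit x

/-- The relations defining `B ⊗[A] B` inside `B ⊗[ℤ] B`, for an extension `φ : A →+* B`. -/
def sepRel (φ : A →+* B) : Submodule ℤ (B ⊗[ℤ] B) :=
  Submodule.span ℤ {x | ∃ (b b' : B) (a : A),
    x = (b * φ a) ⊗ₜ[ℤ] b' - b ⊗ₜ[ℤ] (φ a * b')}

/-- The balanced tensor product `B ⊗[A] B` for an extension `φ : A →+* B`. -/
abbrev SepTensor (φ : A →+* B) := (B ⊗[ℤ] B) ⧸ sepRel φ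

/-- The canonical projection `B ⊗[ℤ] B → B ⊗[A] B`. -/
noncomputable def sepMk (φ : A →+* B) : B ⊗[ℤ] B →ₗ[ℤ] SepTensor φ := (sepRel φ).mkQ

/-- The multiplication map `μ : B ⊗[A] B → B`. -/
noncomputable def sepMul (φ : A →+* B) : SepTensor φ →ₗ[ℤ] B :=
  Submodule.liftQ _ (TensorProduct.lift (LinearMap.mul ℤ B)) (by
    rw [sepRel, Submodule.span_le]
    rintro x ⟨b, b', a, rfl⟩
    change TensorProduct.lift (LinearMap.mul ℤ B) ((b * φ a) ⊗ₜ[ℤ] b' - b ⊗ₜ[ℤ] (φ a * b')) = 0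
    simp [mul_assoc])

/-- Left multiplication by `b` on `B ⊗[A] B`. -/
noncomputable def sepLMul (φ : A →+* B) (b : B) : SepTensor φ →ₗ[ℤ] SepTensor φ :=
  Submodule.mapQ _ _ (TensorProduct.map (LinearMap.mulLeft ℤ b) LinearMap.id) (by
    rw [sepRel, Submodule.span_le]
    rintro x ⟨b₀, b', a, rfl⟩
    change TensorProduct.map (LinearMap.mulLeft ℤ b) LinearMap.id
      ((b₀ * φ a) ⊗ₜ[ℤ] b' - b₀ ⊗ₜ[ℤ] (φ a * b')) ∈ sepRel φ
    simp only [map_sub, TensorProduct.map_tmul,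
      LinearMap.mulLeft_apply, LinearMap.id_apply]
    exact Submodule.subset_span ⟨b * b₀, b', a, by rw [mul_assoc]⟩)

/-- Right multiplication by `b` on `B ⊗[A] B`. -/
noncomputable def sepRMul (φ : A →+* B) (b : B) : SepTensor φ →ₗ[ℤ] SepTensor φ :=
  Submodule.mapQ _ _ (TensorProduct.map LinearMap.id (LinearMap.mulRight ℤ b)) (by
    rw [sepRel, Submodule.span_le]
    rintro x ⟨b₀, b', a, rfl⟩
    change TensorProduct.map LinearMap.id (LinearMap.mulRight ℤ b)
      ((b₀ * φ a) ⊗ₜ[ℤ] b' - b₀ ⊗ₜ[ℤ] (φ a * b')) ∈ sepRel φ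
    simp only [map_sub, TensorProduct.map_tmul,
      LinearMap.mulRight_apply, LinearMap.id_apply]
    exact Submodule.subset_span ⟨b₀, b' * b, a, by rw [mul_assoc]⟩)

/-- The grading on `B ⊗[A] B`: the degree `n` part is generated by the classes of
`b ⊗ b'` with `b, b'` homogeneous of degrees summing to `n`. -/
noncomputable def sepGrading (φ : A →+* B) (𝒝 : ℤ → AddSubgroup B) (n : ℤ) :
    AddSubgroup (SepTensor φ) :=
  AddSubgroup.closure {x | ∃ (i j : ℤ) (b b' : B), b ∈ 𝒝 i ∧ b' ∈ 𝒝 j ∧ i + j = n ∧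
    x = sepMk φ (b ⊗ₜ[ℤ] b')}

/-- The sign involution `b ↦ (-1)^{|b|} b` of a graded ring. -/
noncomputable def signMap (𝒝 : ℤ → AddSubgroup B) [GradedRing 𝒝] : B →+ B :=
  (DirectSum.toAddMonoid fun i =>
      (smulAddHom ℤ B ((Int.negOnePow i : ℤ))).comp (𝒝 i).subtype).comp
    (DirectSum.decomposeAddEquiv 𝒝).toAddMonoidHom

lemma signMap_of_mem (𝒝 : ℤ → AddSubgroup B) [GradedRing 𝒝] {i : ℤ} {x : B}
    (hx : x ∈ 𝒝 i) : signMap 𝒝 x = ((Int.negOnePow i : ℤ)) • x := by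
  classical
  unfold signMap
  simp only [AddMonoidHom.comp_apply, AddEquiv.coe_toAddMonoidHom,
    DirectSum.decomposeAddEquiv_apply, DirectSum.decompose_of_mem 𝒝 hx,
    DirectSum.toAddMonoid_of]
  rfl

/-- The differential `d ⊗ 1 + ε ⊗ d` on `B ⊗[ℤ] B` (with Koszul sign). -/
noncomputable def sepDiffPre (𝒝 : ℤ → AddSubgroup B) [GradedRing 𝒝] (dB : B →+ B) :
    B ⊗[ℤ] B →ₗ[ℤ] B ⊗[ℤ] B :=
  TensorProduct.map dB.toIntLinearMap LinearMap.id +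
    TensorProduct.map (signMap 𝒝).toIntLinearMap dB.toIntLinearMap

/-- `D` is the differential induced on `B ⊗[A] B` by `d_B ⊗ 1 + ε ⊗ d_B`. -/
def IsSepDiff (φ : A →+* B) (𝒝 : ℤ → AddSubgroup B) [GradedRing 𝒝] (dB : B →+ B)
    (D : SepTensor φ →+ SepTensor φ) : Prop :=
  ∀ x : B ⊗[ℤ] B, D (sepMk φ x) = sepMk φ (sepDiffPre 𝒝 dB x)

/-- `ρ : B → B ⊗[A] B` is a `B`-`B`-bimodule section of the multiplication map. -/
def IsSepSection (φ : A →+* B) (ρ : B →+ SepTensor φ) : Prop :=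
  (∀ b, sepMul φ (ρ b) = b) ∧
    (∀ (b₁ c b₂ : B), ρ (b₁ * c * b₂) = sepLMul φ b₁ (sepRMul φ b₂ (ρ c)))

/-- The extension `φ : A →+* B` is separable: the multiplication map
`B ⊗[A] B → B` splits as a bimodule map. -/
def IsSeparableExt (φ : A →+* B) : Prop := ∃ ρ : B →+ SepTensor φ, IsSepSection φ ρ

/-- The extension `φ : A →+* B` of graded rings is graded-separable: the multiplication
map `B ⊗[A] B → B` splits as a map of graded bimodules. -/
def IsGrSeparable (φ : A →+* B) (𝒝 : ℤ → AddSubgroup B) : Prop :=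
  ∃ ρ : B →+ SepTensor φ, IsSepSection φ ρ ∧
    ∀ (n : ℤ), ∀ b ∈ 𝒝 n, ρ b ∈ sepGrading φ 𝒝 n

/-- The dg-extension `φ : (A,d_A) →  (B,d_B)` is dg-separable: the multiplication map
`B ⊗[A] B → B` splits as a map of differential graded bimodules. -/
def IsDGSeparable (φ : A →+* B) (𝒝 : ℤ → AddSubgroup B) [GradedRing 𝒝]
    (dB : B →+ B) : Prop :=
  ∃ D : SepTensor φ →+ SepTensor φ, IsSepDiff φ 𝒝 dB D ∧
    ∃ ρ : B →+ SepTensor φ, IsSepSection φ ρ ∧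
      (∀ (n : ℤ), ∀ b ∈ 𝒝 n, ρ b ∈ sepGrading φ 𝒝 n) ∧
      (∀ b, D (ρ b) = ρ (dB b))

end DGCore

/-- The grading of the dual numbers `A = K[X]/(X²)` with `X = ε` in degree `-1`. -/
noncomputable def dnGrading (K : Type) [Field K] : ℤ → AddSubgroup (DualNumber K) :=
  fun n =>
    if n = 0 then AddSubgroup.closure {x | ∃ a : K, x = TrivSqZeroExt.inl a}
    else if n = -1 then AddSubgroup.closure {x | ∃ a : K, x = TrivSqZeroExt.inr a}
    else ⊥


open TrivSqZeroExt in
/-- The bilinear form `f(b,b') = b₀ b₁' - b₁ b₀'` on dual numbers. -/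
noncomputable def fBil (K : Type) [Field K] : DualNumber K →+ DualNumber K →+ K :=
  AddMonoidHom.mk' (fun b => AddMonoidHom.mk'
      (fun b' => b.fst * b'.snd - b.snd * b'.fst)
      (by intro x y; simp; ring))
    (by intro x y; ext b'; simp; ring)

open TrivSqZeroExt in
noncomputable def Ftens (K : Type) [Field K] :
    DualNumber K ⊗[ℤ] DualNumber K →+ K :=
  TensorProduct.liftAddHom (fBil K) (by
    intro r m n
    simp [fBil, fst_mul, snd_mul, MulOpposite.smul_eq_mul_unop]
    ring)

@[simp] lemma Ftens_tmul (K : Type) [Field K] (b b' : DualNumber K) :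
    Ftens K (b ⊗ₜ[ℤ] b') = b.fst * b'.snd - b.snd * b'.fst := rfl

open TrivSqZeroExt in
noncomputable def Fq (K : Type) [Field K] :
    SepTensor (algebraMap K (DualNumber K)) →ₗ[ℤ] K :=
  Submodule.liftQ _ (Ftens K).toIntLinearMap (by
    rw [sepRel, Submodule.span_le]
    rintro x ⟨b, b', a, rfl⟩
    have ha : algebraMap K (DualNumber K) a = inl a := rfl
    simp only [SetLike.mem_coe, LinearMap.mem_ker, map_sub, AddMonoidHom.coe_toIntLinearMap,
      Ftens_tmul, ha, fst_mul, snd_mul, fst_inl, snd_inl, smul_zero, add_zero,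
      MulOpposite.smul_eq_mul_unop, MulOpposite.unop_op, smul_eq_mul]
    ring)

open TrivSqZeroExt in
lemma dn0_mem {K : Type} [Field K] {x : DualNumber K} (hx : x ∈ dnGrading K 0) :
    ∃ a : K, x = inl a := by
  simp only [dnGrading, if_pos rfl] at hx
  induction hx using AddSubgroup.closure_induction with
  | mem x hx => exact hx
  | zero => exact ⟨0, by simp⟩
  | add x y _ _ hx hy =>
      obtain ⟨a, rfl⟩ := hx; obtain ⟨b, rfl⟩ := hy; exact ⟨a + b, by simp⟩
  | neg x _ hx => obtain ⟨a, rfl⟩ := hx; exact ⟨-a, by simp⟩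

lemma sepLMul_mk {A : Type} [Ring A] {B : Type} [Ring B] (φ : A →+* B) (b : B)
    (t : B ⊗[ℤ] B) : sepLMul φ b (sepMk φ t) =
      sepMk φ (TensorProduct.map (LinearMap.mulLeft ℤ b) LinearMap.id t) := by
  simp [sepLMul, sepMk, Submodule.mapQ_apply]
  rfl

lemma sepRMul_mk {A : Type} [Ring A] {B : Type} [Ring B] (φ : A →+* B) (b : B)
    (t : B ⊗[ℤ] B) : sepRMul φ b (sepMk φ t) =
      sepMk φ (TensorProduct.map LinearMap.id (LinearMap.mulRight ℤ b) t) := by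
  simp [sepRMul, sepMk, Submodule.mapQ_apply]
  rfl

lemma sepMul_mk {A : Type} [Ring A] {B : Type} [Ring B] (φ : A →+* B)
    (t : B ⊗[ℤ] B) : sepMul φ (sepMk φ t) =
      TensorProduct.lift (LinearMap.mul ℤ B) t := by
  simp [sepMul, sepMk, Submodule.liftQ_apply]
  rfl

lemma Fq_mk (K : Type) [Field K] (t : DualNumber K ⊗[ℤ] DualNumber K) :
    Fq K (sepMk (algebraMap K (DualNumber K)) t) = Ftens K t := by
  simp [Fq, sepMk, Submodule.liftQ_apply]

open TrivSqZeroExt in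
lemma dn_key {K : Type} [Field K] {ω : SepTensor (algebraMap K (DualNumber K))}
    (hω : ω ∈ sepGrading (algebraMap K (DualNumber K)) (dnGrading K) 0) :
    Fq K (sepLMul (algebraMap K (DualNumber K)) DualNumber.eps ω)
      - Fq K (sepRMul (algebraMap K (DualNumber K)) DualNumber.eps ω)
      + 2 * (sepMul (algebraMap K (DualNumber K)) ω).fst = 0 := by
  induction hω using AddSubgroup.closure_induction with
  | zero => simp
  | add x y _ _ hx hy =>
      simp only [map_add, TrivSqZeroExt.fst_add]
      linear_combination hx + hy
  | neg x _ hx =>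
      simp only [map_neg, TrivSqZeroExt.fst_neg]
      linear_combination -hx
  | mem x hx =>
      obtain ⟨i, j, b, b', hb, hb', hij, rfl⟩ := hx
      rcases eq_or_ne i 0 with rfl | hi
      · have hj : j = 0 := by omega
        subst hj
        obtain ⟨a, rfl⟩ := dn0_mem hb
        obtain ⟨a', rfl⟩ := dn0_mem hb'
        rw [sepLMul_mk, sepRMul_mk, sepMul_mk, Fq_mk, Fq_mk]
        simp only [TensorProduct.map_tmul, LinearMap.mulLeft_apply, LinearMap.id_apply,
          LinearMap.mulRight_apply, TensorProduct.lift.tmul, LinearMap.mul_apply',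
          Ftens_tmul, inl_mul_inl, fst_mul, snd_mul, fst_inl, snd_inl,
          DualNumber.fst_eps, DualNumber.snd_eps, MulOpposite.smul_eq_mul_unop,
          MulOpposite.unop_op, smul_eq_mul]
        ring
      · rcases eq_or_ne i (-1) with rfl | hi'
        · have hj : j = 1 := by omega
          subst hj
          have : b' = 0 := by
            simpa [dnGrading] using hb'
          subst this
          simp [sepLMul_mk, sepRMul_mk, sepMul_mk, Fq_mk]
        · have : b = 0 := by
            simp only [dnGrading, if_neg hi, if_neg hi'] at hb
            simpa using hb
          subst this
          simp [sepLMul_mk, sepRMul_mk, sepMul_mk, Fq_mk]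

/-- For a field `K` of characteristic different from `2` and
`A = K[X]/(X²)` with `X` of degree `-1` and `d X = 1`, the extension `(K,0) → (A,d)`
is not dg-separable: there is no degree-`0` element `ω` of `A ⊗[K] A` commuting with
`X` and mapping to `1` under the multiplication map. -/
theorem dualNumbers_extension_not_dgSeparable
    {K : Type} [Field K] (hchar : (2 : K) ≠ 0)
    (d : DualNumber K →+ DualNumber K)
    (hd : ∀ x : DualNumber K, d x = TrivSqZeroExt.inl (TrivSqZeroExt.snd x)) :
    ¬ ∃ ω : SepTensor (algebraMap K (DualNumber K)),
        ω ∈ sepGrading (algebraMap K (DualNumber K)) (dnGrading K) 0 ∧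
        sepLMul (algebraMap K (DualNumber K)) DualNumber.eps ω =
          sepRMul (algebraMap K (DualNumber K)) DualNumber.eps ω ∧
        sepMul (algebraMap K (DualNumber K)) ω = 1 := by
  rintro ⟨ω, hgr, hcomm, hmul⟩
  have h := dn_key hgr
  rw [hcomm, hmul, sub_self, zero_add] at h
  simp only [TrivSqZeroExt.fst_one, mul_one] at h
  exact hchar h
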